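/- Let a ≤ b ≤ c be real and λ_− = (a+b+c)/3 − (√2/3)·√(3(a²+b²+c²) − (a+b+c)²). If λ_− + a ≥ 0 (two-nonnegativity of the curvature operator of the second kind), then a ≥ 0 (nonnegative sectional curvature). -/
import Mathlib

theorem stmt5 (a b c : ℝ) (hab : a ≤ b) (hbc : b ≤ c)
    (h : ((a + b + c) / 3
        - Real.sqrt 2 / 3 * Real.sqrt (3 * (a^2 + b^2 + c^2) - (a + b + c)^2)) + a ≥ 0) :
    a ≥ 0 := by
  set Q := 3 * (a^2 + b^2 + c^2) - (a + b + c)^2 with hQ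
  have hx : (b - a) + (c - a) ≥ 0 := by linarith
  have h2Q : ((b - a) + (c - a))^2 ≤ 2 * Q := by nlinarith [sq_nonneg (b - c), sq_nonneg (a - b), sq_nonneg (a - c)]
  have key : (b - a) + (c - a) ≤ Real.sqrt 2 * Real.sqrt Q := by
    rw [← Real.sqrt_mul (by norm_num)]
    calc (b - a) + (c - a) = Real.sqrt (((b - a) + (c - a))^2) := (Real.sqrt_sq hx).symm
    _ ≤ Real.sqrt (2 * Q) := Real.sqrt_le_sqrt h2Q
  linarith
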